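/- Let p be a prime number, G a commutative group (written multiplicatively), and n a nonnegative integer. Let m denote the augmentation ideal of the group algebra (ZMod p)[G], i.e., the kernel of the (ZMod p)-algebra homomorphism (ZMod p)[G] → ZMod p sending every basis element of G to 1. Then the kernel of the (ZMod p)-algebra homomorphism (ZMod p)[G] → (ZMod p)[G/G^{p^n}] induced by the quotient map G → G/G^{p^n}, where G^{p^n} is the subgroup of all p^n-th powers {g^{p^n} : g ∈ G}, equals the ideal of (ZMod p)[G] generated by the set {x^{p^n} : x ∈ m} (the p^n-th Frobenius power of the augmentation ideal). -/

import Mathlib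

section aux

variable {p : ℕ} [Fact p.Prime]

/-- Frobenius power of span. -/
lemma pow_mem_span_pow {R : Type*} [CommRing R] [CharP R p] (n : ℕ) (S : Set R) {x : R}
    (hx : x ∈ Ideal.span S) : x ^ p ^ n ∈ Ideal.span ((· ^ p ^ n) '' S) := by
  refine Submodule.span_induction (p := fun y _ => y ^ p ^ n ∈ Ideal.span ((· ^ p ^ n) '' S))
    ?_ ?_ ?_ ?_ hx
  · intro y hy
    exact Ideal.subset_span ⟨y, hy, rfl⟩
  · show (0 : R) ^ p ^ n ∈ _
    rw [zero_pow (pow_ne_zero n (Fact.out : p.Prime).ne_zero)]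
    exact Ideal.zero_mem _
  · intro a b _ _ ha hb
    rw [add_pow_char_pow]
    exact Ideal.add_mem _ ha hb
  · intro c a _ ha
    rw [smul_eq_mul, mul_pow]
    exact Ideal.mul_mem_left _ _ ha

lemma aug_mem_span {k G : Type*} [CommRing k] [CommGroup G] {x : MonoidAlgebra k G}
    (hx : MonoidAlgebra.lift k k G 1 x = 0) :
    x ∈ Ideal.span (Set.range fun g : G => MonoidAlgebra.single g (1 : k) - 1) := by
  have hsum : (x.coeff.sum fun _ c => c) = 0 := by
    rw [MonoidAlgebra.lift_apply] at hx
    simpa using hx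
  have hrepr : (x.coeff.sum fun g c => c • (MonoidAlgebra.single g (1 : k) - 1)) = x := by
    rw [Finsupp.sum] at hsum
    simp only [Finsupp.sum, smul_sub, MonoidAlgebra.smul_single', mul_one,
      Finset.sum_sub_distrib, ← Finset.sum_smul, hsum, zero_smul, sub_zero]
    exact MonoidAlgebra.sum_coeff_single x
  rw [← hrepr]
  refine Submodule.sum_mem _ fun g _ => ?_
  show x.coeff g • (MonoidAlgebra.single g (1 : k) - 1)
      ∈ Ideal.span (Set.range fun g : G => MonoidAlgebra.single g (1 : k) - 1)
  exact Submodule.smul_of_tower_mem _ _ (Ideal.subset_span (Set.mem_range_self g))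

/-- The kernel of the map induced by the quotient map is contained in the ideal generated by
`h - 1` for `h` in the subgroup. -/
lemma ker_le_span_sub_one {k G : Type*} [CommRing k] [CommGroup G] (N : Subgroup G) :
    RingHom.ker (MonoidAlgebra.mapDomainAlgHom k k (QuotientGroup.mk' N)) ≤
      Ideal.span (Set.range fun h : N => MonoidAlgebra.single (h : G) (1 : k) - 1) := by
  set I : Ideal (MonoidAlgebra k G) :=
    Ideal.span (Set.range fun h : N => MonoidAlgebra.single (h : G) (1 : k) - 1) with hI
  set π := Ideal.Quotient.mk I with hπ
  have hone : π (MonoidAlgebra.single (1 : G) (1 : k)) = 1 := by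
    rw [← MonoidAlgebra.one_def, map_one]
  have hmul : ∀ a b : G, π (MonoidAlgebra.single (a * b) (1 : k))
      = π (MonoidAlgebra.single a (1 : k)) * π (MonoidAlgebra.single b (1 : k)) := by
    intro a b
    rw [← map_mul, MonoidAlgebra.single_mul_single, mul_one]
  set u : G →* (MonoidAlgebra k G ⧸ I)ˣ :=
    { toFun := fun g => ⟨π (MonoidAlgebra.single g (1 : k)),
        π (MonoidAlgebra.single g⁻¹ (1 : k)),
        by rw [← hmul, mul_inv_cancel, hone],
        by rw [← hmul, inv_mul_cancel, hone]⟩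
      map_one' := Units.ext hone
      map_mul' := fun a b => Units.ext (hmul a b) } with hu
  have hker : N ≤ u.ker := by
    rintro h hh
    refine Units.ext ?_
    show π (MonoidAlgebra.single h (1 : k)) = 1
    rw [← hone, Ideal.Quotient.mk_eq_mk_iff_sub_mem]
    exact Ideal.subset_span ⟨⟨h, hh⟩, rfl⟩
  set ψ : MonoidAlgebra k (G ⧸ N) →ₐ[k] MonoidAlgebra k G ⧸ I :=
    MonoidAlgebra.lift k _ (G ⧸ N)
      ((Units.coeHom _).comp (QuotientGroup.lift N u hker)) with hψ
  have hcomp : ψ.comp (MonoidAlgebra.mapDomainAlgHom k k (QuotientGroup.mk' N))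
      = Ideal.Quotient.mkₐ k I := by
    apply MonoidAlgebra.algHom_ext ?_ (Subsingleton.elim _ _)
    intro g
    simp only [AlgHom.comp_apply, MonoidAlgebra.mapDomainAlgHom_apply,
      MonoidAlgebra.mapDomain_single, hψ, MonoidAlgebra.lift_single, one_smul,
      Ideal.Quotient.mkₐ_eq_mk]
    rfl
  intro x hx
  rw [RingHom.mem_ker] at hx
  have hπx : π x = 0 := by
    have h := congrArg (fun φ => φ x) hcomp
    simp only [AlgHom.comp_apply] at h
    rw [hx, map_zero] at h
    exact h.symm
  rwa [hπ, Ideal.Quotient.eq_zero_iff_mem] at hπx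

end aux

/-- Let `G` be a commutative group and let `𝔪` be the augmentation ideal of `(ZMod p)[G]`.
The kernel of the induced map `(ZMod p)[G] → (ZMod p)[G/G^(p^n)]`, where `G^(p^n)` is the
subgroup of `p^n`-th powers, is the `p^n`-th Frobenius power of `𝔪`, i.e. the ideal generated
by the `p^n`-th powers of elements of `𝔪`. -/
theorem stmt_10 (p : ℕ) [Fact p.Prime] (G : Type*) [CommGroup G] (n : ℕ) :
    RingHom.ker (MonoidAlgebra.mapDomainAlgHom (ZMod p) (ZMod p)
        (QuotientGroup.mk' (powMonoidHom (p ^ n) : G →* G).range)) =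
      Ideal.span ((fun x : MonoidAlgebra (ZMod p) G => x ^ (p ^ n)) ''
        (RingHom.ker
          (MonoidAlgebra.lift (ZMod p) (ZMod p) G (1 : G →* ZMod p)) :
            Set (MonoidAlgebra (ZMod p) G))) := by
  classical
  haveI : CharP (MonoidAlgebra (ZMod p) G) p :=
    charP_of_injective_algebraMap' (ZMod p) p
  haveI : CharP (MonoidAlgebra (ZMod p) (G ⧸ (powMonoidHom (p ^ n) : G →* G).range)) p :=
    charP_of_injective_algebraMap' (ZMod p) p
  have hQpow : ∀ x : G ⧸ (powMonoidHom (p ^ n) : G →* G).range, x ^ p ^ n = 1 := by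
    intro x
    obtain ⟨g, rfl⟩ := QuotientGroup.mk_surjective x
    rw [← QuotientGroup.mk_pow, QuotientGroup.eq_one_iff]
    exact ⟨g, rfl⟩
  apply le_antisymm
  · -- ker ≤ span of p^n-th powers
    refine le_trans (ker_le_span_sub_one _) ?_
    rw [Ideal.span_le]
    rintro _ ⟨⟨_, g, rfl⟩, rfl⟩
    have hmem : MonoidAlgebra.single g (1 : ZMod p) - 1
        ∈ RingHom.ker (MonoidAlgebra.lift (ZMod p) (ZMod p) G (1 : G →* ZMod p)) := by
      rw [RingHom.mem_ker, map_sub, MonoidAlgebra.lift_single]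
      simp
    have heq : MonoidAlgebra.single (powMonoidHom (p ^ n) g : G) (1 : ZMod p) - 1
        = (MonoidAlgebra.single g (1 : ZMod p) - 1) ^ p ^ n := by
      rw [sub_pow_char_pow, MonoidAlgebra.single_pow, one_pow, one_pow]
      rfl
    exact Ideal.subset_span ⟨_, hmem, heq.symm⟩
  · -- span of p^n-th powers ≤ ker
    rw [Ideal.span_le]
    rintro _ ⟨x, hx, rfl⟩
    rw [SetLike.mem_coe, RingHom.mem_ker, map_pow]
    set f := MonoidAlgebra.mapDomainAlgHom (ZMod p) (ZMod p)
      (QuotientGroup.mk' (powMonoidHom (p ^ n) : G →* G).range) with hf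
    have hfx : MonoidAlgebra.lift (ZMod p) (ZMod p) _ 1 (f x) = 0 := by
      have hc : (MonoidAlgebra.lift (ZMod p) (ZMod p) _
            (1 : (G ⧸ (powMonoidHom (p ^ n) : G →* G).range) →* ZMod p)).comp f
          = MonoidAlgebra.lift (ZMod p) (ZMod p) G (1 : G →* ZMod p) := by
        apply MonoidAlgebra.algHom_ext ?_ (Subsingleton.elim _ _)
        intro g
        simp [hf, MonoidAlgebra.lift_single]
      have := congrArg (fun φ => φ x) hc
      simp only [AlgHom.comp_apply] at this
      rw [this]
      exact hx
    have hmem := pow_mem_span_pow (p := p) n _ (aug_mem_span hfx)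
    have hzero : ((· ^ p ^ n) '' Set.range
        fun g : G ⧸ (powMonoidHom (p ^ n) : G →* G).range =>
          MonoidAlgebra.single g (1 : ZMod p) - 1) ⊆ {0} := by
      rintro _ ⟨_, ⟨g, rfl⟩, rfl⟩
      have heq : (MonoidAlgebra.single g (1 : ZMod p) - 1) ^ p ^ n
          = MonoidAlgebra.single (g ^ p ^ n) ((1 : ZMod p) ^ p ^ n) - 1 ^ p ^ n := by
        rw [sub_pow_char_pow, MonoidAlgebra.single_pow]
      simp only [Set.mem_singleton_iff, heq, hQpow g, one_pow]
      rw [← MonoidAlgebra.one_def, sub_self]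
    have hb := Ideal.span_mono hzero hmem
    rwa [Ideal.span_singleton_eq_bot.mpr rfl, Ideal.mem_bot] at hb
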